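/- (Theorem 1, scalar case) Under the scalar sign dynamics, the parameter converges exponentially to θ*: there exists a constant α > 0 such that for all τ ≥ 0, |θ(τ) - θ*| ≤ α · γ^{τ/C}, where C = ⌈γ⁻¹⌉ and γ^{τ/C} denotes the real power of γ with exponent τ/C. -/

import Mathlib

open Classical in
/-- Theorem 1, scalar case: exponential convergence
`|θ(τ) - θ*| ≤ α·γ^{τ/C}` with `C = ⌈γ⁻¹⌉` (real power). -/
theorem exponential_convergence_scalar
    (θs γ η0 θ0 : ℝ) (hγ0 : 0 < γ) (hγ1 : γ < 1) (hη0 : 0 < η0)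
    (θ η s : ℕ → ℝ)
    (hθinit : θ 0 = θ0) (hηinit : η 0 = η0)
    (hs : ∀ τ, s τ = -Real.sign (θ τ - θs))
    (hθrec : ∀ τ, θ (τ + 1) = θ τ + s τ * η τ)
    (hηrec : ∀ τ, η (τ + 1) = if s (τ + 1) * s τ = -1 then γ * η τ else η τ) :
    ∃ α : ℝ, 0 < α ∧
      ∀ τ : ℕ, |θ τ - θs| ≤ α * γ ^ ((τ : ℝ) / ((⌈γ⁻¹⌉ : ℤ) : ℝ)) := by
  set e : ℕ → ℝ := fun τ => θ τ - θs with he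
  have hsval : ∀ τ, s τ = -Real.sign (e τ) := hs
  have hestep : ∀ τ, e (τ + 1) = e τ - Real.sign (e τ) * η τ := by
    intro τ
    simp only [he]
    rw [hθrec τ, hsval τ]
    simp only [he]
    ring
  have hηpos : ∀ τ, 0 < η τ := by
    intro τ
    induction τ with
    | zero => rwa [hηinit]
    | succ n ih =>
      rw [hηrec n]
      split
      · exact mul_pos hγ0 ih
      · exact ih
  have hηstep : ∀ τ, η (τ + 1) ≤ η τ := by
    intro τ
    rw [hηrec τ]
    split
    · nlinarith [hηpos τ]
    · exact le_rfl
  have hηanti : ∀ a b : ℕ, a ≤ b → η b ≤ η a := by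
    intro a b hab
    induction b, hab using Nat.le_induction with
    | base => exact le_rfl
    | succ n hn ih => exact (hηstep n).trans ih
  have hzero : ∀ τ, e τ = 0 → e (τ + 1) = 0 := by
    intro τ h
    rw [hestep τ, h, Real.sign_zero]
    ring
  have hzero' : ∀ a b : ℕ, a ≤ b → e a = 0 → e b = 0 := by
    intro a b hab ha
    induction b, hab using Nat.le_induction with
    | base => exact ha
    | succ n hn ih => exact hzero n ih
  have hpos : ∀ τ, 0 < e τ → e (τ + 1) = e τ - η τ := by
    intro τ h
    rw [hestep τ, Real.sign_of_pos h]
    ring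
  have hneg : ∀ τ, e τ < 0 → e (τ + 1) = e τ + η τ := by
    intro τ h
    rw [hestep τ, Real.sign_of_neg h]
    ring
  have habs : ∀ τ, e τ ≠ 0 → |e (τ + 1)| = abs (|e τ| - η τ) := by
    intro τ h
    rcases h.lt_or_gt with h | h
    · rw [hneg τ h, abs_of_neg h, show e τ + η τ = -(-e τ - η τ) by ring, abs_neg]
    · rw [hpos τ h, abs_of_pos h]
  have hnoflip : ∀ τ, η τ ≤ |e τ| → η (τ + 1) = η τ := by
    intro τ h
    have hne : e τ ≠ 0 := by
      intro h0
      rw [h0, abs_zero] at h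
      exact absurd h (not_le.2 (hηpos τ))
    rw [hηrec τ, if_neg]
    intro hcontra
    rcases hne.lt_or_gt with hlt | hlt
    · rw [abs_of_neg hlt] at h
      have h1 : e (τ + 1) ≤ 0 := by rw [hneg τ hlt]; linarith
      have hs1 : s τ = 1 := by rw [hsval τ, Real.sign_of_neg hlt]; norm_num
      rcases h1.lt_or_eq with h2 | h2
      · rw [hsval (τ + 1), Real.sign_of_neg h2, hs1] at hcontra; norm_num at hcontra
      · rw [hsval (τ + 1), h2, Real.sign_zero, hs1] at hcontra; norm_num at hcontra
    · rw [abs_of_pos hlt] at h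
      have h1 : 0 ≤ e (τ + 1) := by rw [hpos τ hlt]; linarith
      have hs1 : s τ = -1 := by rw [hsval τ, Real.sign_of_pos hlt]
      rcases h1.lt_or_eq with h2 | h2
      · rw [hsval (τ + 1), Real.sign_of_pos h2, hs1] at hcontra; norm_num at hcontra
      · rw [hsval (τ + 1), ← h2, Real.sign_zero, hs1] at hcontra; norm_num at hcontra
  have hflip : ∀ τ, e τ ≠ 0 → |e τ| < η τ → η (τ + 1) = γ * η τ := by
    intro τ hne h
    rw [hηrec τ, if_pos]
    rcases hne.lt_or_gt with hlt | hlt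
    · rw [abs_of_neg hlt] at h
      have h1 : 0 < e (τ + 1) := by rw [hneg τ hlt]; linarith
      rw [hsval (τ + 1), hsval τ, Real.sign_of_pos h1, Real.sign_of_neg hlt]; norm_num
    · rw [abs_of_pos hlt] at h
      have h1 : e (τ + 1) < 0 := by rw [hpos τ hlt]; linarith
      rw [hsval (τ + 1), hsval τ, Real.sign_of_neg h1, Real.sign_of_pos hlt]; norm_num
  have hP : ∀ τ, |e τ| * γ ≤ η τ → |e (τ + 1)| * γ ≤ η (τ + 1) := by
    intro τ h
    by_cases h0 : e τ = 0
    · rw [hzero τ h0, abs_zero, zero_mul]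
      exact (hηpos _).le
    · by_cases h1 : |e τ| < η τ
      · rw [hflip τ h0 h1, habs τ h0, abs_of_nonpos (by linarith)]
        nlinarith [mul_nonneg (abs_nonneg (e τ)) hγ0.le]
      · push_neg at h1
        rw [hnoflip τ h1, habs τ h0, abs_of_nonneg (by linarith)]
        nlinarith [mul_nonneg (hηpos τ).le hγ0.le]
  have hT : ∃ T, |e T| * γ ≤ η T := by
    by_contra hcon
    push_neg at hcon
    have key : ∀ τ : ℕ, η τ = η 0 ∧ |e τ| = |e 0| - τ * η 0 := by
      intro τ
      induction τ with
      | zero => simp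
      | succ n ih =>
        obtain ⟨ihη, ihe⟩ := ih
        have h1 : η n < |e n| * γ := hcon n
        have h2 : η n ≤ |e n| := by nlinarith [hηpos n, abs_nonneg (e n)]
        have hne : e n ≠ 0 := by
          intro h0
          rw [h0, abs_zero, zero_mul] at h1
          exact absurd h1 (not_lt.2 (hηpos n).le)
        refine ⟨by rw [hnoflip n h2, ihη], ?_⟩
        rw [habs n hne, abs_of_nonneg (by linarith), ihη, ihe]
        push_cast
        ring
    obtain ⟨N, hN⟩ := exists_nat_gt (|e 0| / η 0)
    have h0 : 0 < η 0 := hηpos 0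
    have hN2 : |e 0| < N * η 0 := by
      rw [div_lt_iff₀ h0] at hN
      linarith
    have := (key N).2
    nlinarith [abs_nonneg (e N)]
  set C : ℕ := (⌈γ⁻¹⌉ : ℤ).toNat with hCdef
  have hγinv : 1 < γ⁻¹ := (one_lt_inv₀ hγ0).2 hγ1
  have hCeil : (1 : ℤ) ≤ ⌈γ⁻¹⌉ := by
    have : (0 : ℤ) < ⌈γ⁻¹⌉ := Int.ceil_pos.mpr (by linarith)
    omega
  have hCcast : ((C : ℕ) : ℝ) = ((⌈γ⁻¹⌉ : ℤ) : ℝ) := by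
    rw [hCdef]
    have h := Int.toNat_of_nonneg (show (0 : ℤ) ≤ ⌈γ⁻¹⌉ by omega)
    exact_mod_cast congrArg (fun z : ℤ => (z : ℝ)) h
  have hCge : γ⁻¹ ≤ (C : ℝ) := by rw [hCcast]; exact Int.le_ceil _
  have hC1 : 1 ≤ C := by rw [hCdef]; omega
  have hwin : ∀ τ, |e τ| * γ ≤ η τ → e (τ + C) = 0 ∨ η (τ + C) ≤ γ * η τ := by
    intro τ hPτ
    by_cases hz : ∃ j ≤ C, e (τ + j) = 0
    · obtain ⟨j, hj, hej⟩ := hz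
      exact Or.inl (hzero' (τ + j) (τ + C) (by omega) hej)
    · push_neg at hz
      by_cases hf : ∃ j < C, |e (τ + j)| < η (τ + j)
      · obtain ⟨j, hj, hfj⟩ := hf
        right
        have h1 : η (τ + j + 1) = γ * η (τ + j) := hflip _ (hz j hj.le) hfj
        calc η (τ + C) ≤ η (τ + j + 1) := hηanti _ _ (by omega)
          _ = γ * η (τ + j) := h1
          _ ≤ γ * η τ := by nlinarith [hηanti τ (τ + j) (by omega)]
      · exfalso
        push_neg at hf
        have key : ∀ j, j ≤ C → η (τ + j) = η τ ∧ |e (τ + j)| = |e τ| - j * η τ := by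
          intro j hj
          induction j with
          | zero => simp
          | succ n ih =>
            have hn : n < C := by omega
            obtain ⟨ihη, ihe⟩ := ih (by omega)
            have h2 : η (τ + n) ≤ |e (τ + n)| := hf n hn
            constructor
            · rw [show τ + (n + 1) = (τ + n) + 1 by ring, hnoflip _ h2, ihη]
            · rw [show τ + (n + 1) = (τ + n) + 1 by ring, habs _ (hz n hn.le),
                abs_of_nonneg (by linarith), ihη, ihe]
              push_cast
              ring
        obtain ⟨hη', he'⟩ := key C le_rfl
        have h3 : 0 < |e (τ + C)| := abs_pos.mpr (hz C le_rfl)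
        have h4 : |e τ| ≤ γ⁻¹ * η τ := by
          rw [← div_eq_inv_mul, le_div_iff₀ hγ0]
          exact hPτ
        have h5 : γ⁻¹ * η τ ≤ (C : ℝ) * η τ :=
          mul_le_mul_of_nonneg_right hCge (hηpos τ).le
        nlinarith
  obtain ⟨T, hTP⟩ := hT
  have hPge : ∀ τ, T ≤ τ → |e τ| * γ ≤ η τ := by
    intro τ hτ
    induction τ, hτ using Nat.le_induction with
    | base => exact hTP
    | succ n hn ih => exact hP n ih
  have hgeo : ∀ n : ℕ, e (T + n * C) = 0 ∨ η (T + n * C) ≤ γ ^ n * η T := by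
    intro n
    induction n with
    | zero => right; simp
    | succ n ih =>
      have heq : T + (n + 1) * C = T + n * C + C := by rw [Nat.succ_mul]; ring
      rcases ih with h | h
      · left
        rw [heq]
        exact hzero' _ _ (Nat.le_add_right _ _) h
      · rcases hwin (T + n * C) (hPge _ (Nat.le_add_right _ _)) with h2 | h2
        · left; rw [heq]; exact h2
        · right
          rw [heq]
          calc η (T + n * C + C) ≤ γ * η (T + n * C) := h2
            _ ≤ γ * (γ ^ n * η T) := by nlinarith
            _ = γ ^ (n + 1) * η T := by ring
  set Cr : ℝ := ((⌈γ⁻¹⌉ : ℤ) : ℝ) with hCr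
  have hCrpos : 0 < Cr := by
    rw [← hCcast]
    exact_mod_cast Nat.lt_of_lt_of_le Nat.zero_lt_one hC1
  have hnemp : (Finset.range (T + 1)).Nonempty := ⟨0, Finset.mem_range.mpr (Nat.succ_pos T)⟩
  set S : ℝ := (Finset.range (T + 1)).sup' hnemp (fun τ => |e τ|) with hS
  have hS0 : 0 ≤ S := by
    rw [hS]
    exact le_trans (abs_nonneg (e 0))
      (Finset.le_sup' (fun τ => |e τ|) (Finset.mem_range.mpr (Nat.succ_pos T)))
  set A : ℝ := S * γ ^ (-(T : ℝ) / Cr) with hA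
  set B : ℝ := η T * γ ^ (-(T : ℝ) / Cr - 2) with hB
  have hBpos : 0 < B := mul_pos (hηpos T) (Real.rpow_pos_of_pos hγ0 _)
  refine ⟨max A B, lt_max_of_lt_right hBpos, ?_⟩
  intro τ
  have hrpos : 0 < γ ^ ((τ : ℝ) / Cr) := Real.rpow_pos_of_pos hγ0 _
  show |e τ| ≤ max A B * γ ^ ((τ : ℝ) / Cr)
  rcases le_or_gt τ T with hcase | hcase
  · -- prefix: τ ≤ T
    have h1 : |e τ| ≤ S := by
      rw [hS]
      exact Finset.le_sup' (fun τ => |e τ|) (Finset.mem_range.mpr (by omega))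
    have h2 : (1 : ℝ) ≤ γ ^ (-(T : ℝ) / Cr + (τ : ℝ) / Cr) := by
      rw [show (1 : ℝ) = γ ^ (0 : ℝ) by rw [Real.rpow_zero]]
      apply Real.rpow_le_rpow_of_exponent_ge hγ0 hγ1.le
      have hτT : (τ : ℝ) ≤ (T : ℝ) := by exact_mod_cast hcase
      rw [← add_div]
      exact div_nonpos_of_nonpos_of_nonneg (by linarith) hCrpos.le
    calc |e τ| ≤ S := h1
      _ ≤ S * γ ^ (-(T : ℝ) / Cr + (τ : ℝ) / Cr) := le_mul_of_one_le_right hS0 h2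
      _ = A * γ ^ ((τ : ℝ) / Cr) := by rw [hA, Real.rpow_add hγ0]; ring
      _ ≤ max A B * γ ^ ((τ : ℝ) / Cr) :=
        mul_le_mul_of_nonneg_right (le_max_left _ _) hrpos.le
  · -- tail: T < τ
    set m : ℕ := τ - T with hm
    set n : ℕ := m / C with hn
    set r : ℕ := m % C with hr
    have hmr : m = C * n + r := (Nat.div_add_mod m C).symm
    have hrC : r < C := Nat.mod_lt _ (by omega)
    have hτm : τ = T + m := by omega
    have hτeq : τ = T + n * C + r := by rw [hτm, hmr]; ring
    have hle : T + n * C ≤ τ := Nat.le.intro hτeq.symm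
    rcases hgeo n with h | h
    · have h0 : e τ = 0 := hzero' (T + n * C) τ hle h
      rw [h0, abs_zero]
      exact mul_nonneg (le_trans hBpos.le (le_max_right A B)) hrpos.le
    · have hPτ : |e τ| * γ ≤ η τ := hPge τ hcase.le
      have h1 : η τ ≤ η (T + n * C) := hηanti _ _ hle
      have h2 : |e τ| * γ ≤ γ ^ n * η T := by linarith
      have h3 : |e τ| ≤ η T * γ ^ ((n : ℝ) - 1) := by
        rw [Real.rpow_sub hγ0, Real.rpow_one, Real.rpow_natCast, ← mul_div_assoc,
          le_div_iff₀ hγ0]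
        nlinarith [h2]
      have hτR : (τ : ℝ) = (T : ℝ) + (n : ℝ) * Cr + (r : ℝ) := by
        rw [← hCcast]
        exact_mod_cast hτeq
      have hrCr : (r : ℝ) ≤ Cr := by
        rw [← hCcast]
        exact_mod_cast hrC.le
      have hexp : -(T : ℝ) / Cr - 2 + (τ : ℝ) / Cr ≤ (n : ℝ) - 1 := by
        have hkey : (n : ℝ) - 1 - (-(T : ℝ) / Cr - 2 + (τ : ℝ) / Cr) = (Cr - (r : ℝ)) / Cr := by
          rw [hτR]
          field_simp
          ring
        have : 0 ≤ (Cr - (r : ℝ)) / Cr := div_nonneg (by linarith) hCrpos.le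
        linarith [hkey ▸ this]
      have h4 : γ ^ ((n : ℝ) - 1) ≤ γ ^ (-(T : ℝ) / Cr - 2 + (τ : ℝ) / Cr) :=
        Real.rpow_le_rpow_of_exponent_ge hγ0 hγ1.le hexp
      calc |e τ| ≤ η T * γ ^ ((n : ℝ) - 1) := h3
        _ ≤ η T * γ ^ (-(T : ℝ) / Cr - 2 + (τ : ℝ) / Cr) :=
          mul_le_mul_of_nonneg_left h4 (hηpos T).le
        _ = B * γ ^ ((τ : ℝ) / Cr) := by rw [hB, Real.rpow_add hγ0]; ring
        _ ≤ max A B * γ ^ ((τ : ℝ) / Cr) :=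
          mul_le_mul_of_nonneg_right (le_max_right _ _) hrpos.le
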